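/- Let T > 0, let y ∈ C⁰([0,T)) ∩ C¹((0,T)), let a > 0, and let h ∈ L¹((0,T)) ∩ C⁰((0,T)) be nonnegative. If y'(t) + a·(y(t))₊² ≤ h(t) for all t ∈ (0,T), where (ξ)₊ := max{ξ,0}, then y(t) ≤ 1/(a t) + ∫₀^t h(s) ds for all t ∈ (0,T). -/
import Mathlib


open MeasureTheory Set

/-- ODE comparison lemma (Lemma 8.4 / `lem834`): if `y' + a·(y)₊² ≤ h` on `(0,T)`
with `a > 0` and `h` nonnegative, continuous and integrable on `(0,T)`, then
`y(t) ≤ 1/(a t) + ∫₀ᵗ h` on `(0,T)`. -/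
theorem stmt_19
    (T : ℝ) (hT : 0 < T)
    (y y' h : ℝ → ℝ) (A : ℝ) (hA : 0 < A)
    (hy_cont : ContinuousOn y (Set.Ico 0 T))
    (hy_deriv : ∀ t ∈ Set.Ioo (0:ℝ) T, HasDerivAt y (y' t) t)
    (hy'_cont : ContinuousOn y' (Set.Ioo 0 T))
    (hh_nonneg : ∀ t ∈ Set.Ioo (0:ℝ) T, 0 ≤ h t)
    (hh_cont : ContinuousOn h (Set.Ioo 0 T))
    (hh_int : IntegrableOn h (Set.Ioo 0 T))
    (hmain : ∀ t ∈ Set.Ioo (0:ℝ) T, y' t + A * (max (y t) 0) ^ 2 ≤ h t) :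
    ∀ t ∈ Set.Ioo (0:ℝ) T, y t ≤ 1 / (A * t) + ∫ s in Set.Ioc (0:ℝ) t, h s := by
  intro t ht
  obtain ⟨ht0, htT⟩ := ht
  set H : ℝ → ℝ := fun s => ∫ x in (0:ℝ)..s, h x with hHdef
  have hII : ∀ s ∈ Set.Ioo (0:ℝ) T, IntervalIntegrable h volume 0 s := by
    intro s hs
    rw [intervalIntegrable_iff_integrableOn_Ioc_of_le hs.1.le]
    exact hh_int.mono_set (fun x hx => ⟨hx.1, hx.2.trans_lt hs.2⟩)
  have hHderiv : ∀ s ∈ Set.Ioo (0:ℝ) T, HasDerivAt H (h s) s := by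
    intro s hs
    exact intervalIntegral.integral_hasDerivAt_right (hII s hs)
      (hh_cont.stronglyMeasurableAtFilter isOpen_Ioo s hs)
      (hh_cont.continuousAt (isOpen_Ioo.mem_nhds hs))
  have hH_nonneg : ∀ s ∈ Set.Ioo (0:ℝ) T, 0 ≤ H s := by
    intro s hs
    rw [hHdef]
    simp only
    rw [intervalIntegral.integral_of_le hs.1.le]
    apply setIntegral_nonneg measurableSet_Ioc
    intro x hx
    exact hh_nonneg x ⟨hx.1, hx.2.trans_lt hs.2⟩
  set w : ℝ → ℝ := fun s => y s - H s with hwdef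
  have hwderiv : ∀ s ∈ Set.Ioo (0:ℝ) T, HasDerivAt w (y' s - h s) s :=
    fun s hs => (hy_deriv s hs).sub (hHderiv s hs)
  have hHt : H t = ∫ s in Set.Ioc (0:ℝ) t, h s := by
    rw [hHdef]; simp only; rw [intervalIntegral.integral_of_le ht0.le]
  suffices hwle : w t ≤ 1 / (A * t) by
    have := hwle
    rw [hwdef] at this
    simp only at this
    rw [hHt] at this
    linarith
  by_contra hcon
  push_neg at hcon
  have hwt0 : 0 < w t := lt_trans (by positivity) hcon
  set c : ℝ := 1 / (A * w t) with hcdef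
  have hc0 : 0 < c := by positivity
  have hct : c < t := by
    rw [hcdef, div_lt_iff₀ (by positivity)]
    rw [div_lt_iff₀ (by positivity)] at hcon
    nlinarith
  set s₀ : ℝ := (t - c) / 2 with hs₀def
  have hs₀0 : 0 < s₀ := by rw [hs₀def]; linarith
  have hs₀t : s₀ < t := by rw [hs₀def]; linarith
  have hD : Set.Icc s₀ t ⊆ Set.Ioo (0:ℝ) T :=
    fun x hx => ⟨lt_of_lt_of_le hs₀0 hx.1, lt_of_le_of_lt hx.2 htT⟩
  -- w is antitone on [s₀, t]
  have hwcont : ContinuousOn w (Set.Icc s₀ t) :=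
    fun s hs => ((hwderiv s (hD hs)).continuousAt).continuousWithinAt
  have hwanti : AntitoneOn w (Set.Icc s₀ t) := by
    apply antitoneOn_of_deriv_nonpos (convex_Icc _ _) hwcont
    · intro s hs
      rw [interior_Icc] at hs
      exact ((hwderiv s (hD (Set.Ioo_subset_Icc_self hs))).differentiableAt).differentiableWithinAt
    · intro s hs
      rw [interior_Icc] at hs
      have hs' := hD (Set.Ioo_subset_Icc_self hs)
      rw [(hwderiv s hs').deriv]
      have := hmain s hs'
      nlinarith [sq_nonneg (max (y s) 0)]
  have hwpos : ∀ s ∈ Set.Icc s₀ t, 0 < w s := by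
    intro s hs
    exact lt_of_lt_of_le hwt0 (hwanti hs ⟨hs₀t.le, le_refl t⟩ hs.2)
  -- φ s = A * s - (w s)⁻¹ is antitone on [s₀, t]
  set φ : ℝ → ℝ := fun s => A * s - (w s)⁻¹ with hφdef
  have hφderiv : ∀ s ∈ Set.Icc s₀ t,
      HasDerivAt φ (A - (-(y' s - h s) / (w s) ^ 2)) s := by
    intro s hs
    have h1 : HasDerivAt (fun x : ℝ => A * x) A s := by
      simpa using (hasDerivAt_id s).const_mul A
    exact h1.sub ((hwderiv s (hD hs)).inv (ne_of_gt (hwpos s hs)))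
  have hφanti : AntitoneOn φ (Set.Icc s₀ t) := by
    apply antitoneOn_of_deriv_nonpos (convex_Icc _ _)
    · exact fun s hs => ((hφderiv s hs).continuousAt).continuousWithinAt
    · intro s hs
      rw [interior_Icc] at hs
      exact ((hφderiv s (Set.Ioo_subset_Icc_self hs)).differentiableAt).differentiableWithinAt
    · intro s hs
      rw [interior_Icc] at hs
      have hsI := Set.Ioo_subset_Icc_self hs
      rw [(hφderiv s hsI).deriv]
      have hwsp := hwpos s hsI
      have hw2 : 0 < (w s) ^ 2 := pow_pos hwsp 2
      rw [sub_nonpos, le_div_iff₀ hw2]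
      have hm := hmain s (hD hsI)
      have hws : w s ≤ y s := by
        have := hH_nonneg s (hD hsI)
        rw [hwdef]; simp only; linarith
      have hmax : w s ≤ max (y s) 0 := le_trans hws (le_max_left _ _)
      have hsq : w s ^ 2 ≤ (max (y s) 0) ^ 2 := by nlinarith
      nlinarith [mul_le_mul_of_nonneg_left hsq hA.le]
  have hkey : φ t ≤ φ s₀ :=
    hφanti ⟨le_refl s₀, hs₀t.le⟩ ⟨hs₀t.le, le_refl t⟩ hs₀t.le
  have hw0inv : 0 < (w s₀)⁻¹ := by
    exact inv_pos.mpr (hwpos s₀ ⟨le_refl s₀, hs₀t.le⟩)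
  have h5 : A * (t - s₀) ≤ (w t)⁻¹ := by
    rw [hφdef] at hkey; simp only at hkey; linarith
  have h6 : (w t)⁻¹ = A * c := by
    rw [hcdef]; field_simp
  rw [h6] at h5
  have h7 : t - s₀ ≤ c := le_of_mul_le_mul_left (by linarith [h5]) hA
  rw [hs₀def] at h7
  linarith
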